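/- (Theorem 2: oracle-optimal sequential sampling policy.) Fix N ≥ 1, p ∈ (0,1)^N, τ ∈ (0,1), and budget n_b ≥ 1. In the oracle adaptive sampling model — filtration (ℱ_t); ℱ_{t−1}-measurable random probability vectors q_t ∈ (0,1]^N with q_t(j) ≥ τ/N a.s.; I_t with P(I_t = j | ℱ_{t−1}) = q_t(j) a.s.; Y_t ∈ {0,1} with P(Y_t = 1 | ℱ_{t−1}, I_t) = p_{I_t} a.s.; ℱ_t ⊇ σ(ℱ_{t−1}, I_t, Y_t) — define M_{n_b} = Σ_{t=1}^{n_b} (Y_t − p_{I_t})/q_t(I_t). Then Var(M_{n_b}) ≥ n_b·( Σ_{j=1}^N √(p_j(1 − p_j)) )², and this lower bound is attained exactly when, for every t, q_t(j) = √(p_j(1−p_j)) / Σ_{k=1}^N √(p_k(1−p_k)) almost surely (provided this time-independent policy satisfies the assumed lower bound). In particular, the variance-minimizing policy is time-independent and uniquely given by q_t(j) ∝ √(p_j(1 − p_j)). -/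

import Mathlib

open MeasureTheory Finset

lemma ops_cs {N : ℕ} (hN : 1 ≤ N) (f : Fin N → ℝ) (hf : ∀ j, 0 < f j)
    (r : Fin N → ℝ) (hr : ∀ j, 0 < r j) (hsum : ∑ j, r j = 1) :
    (∑ j, Real.sqrt (f j)) ^ 2 ≤ ∑ j, f j / r j ∧
    ((∑ j, f j / r j = (∑ j, Real.sqrt (f j)) ^ 2) ↔
      ∀ j, r j = Real.sqrt (f j) / ∑ k, Real.sqrt (f k)) := by
  have hNe : Nonempty (Fin N) := ⟨⟨0, hN⟩⟩
  set S : ℝ := ∑ j, Real.sqrt (f j) with hS_def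
  have hS : 0 < S :=
    Finset.sum_pos (fun j _ => Real.sqrt_pos.2 (hf j)) Finset.univ_nonempty
  have hterm : ∀ j, (Real.sqrt (f j) - S * r j) ^ 2 / r j
      = f j / r j - 2 * S * Real.sqrt (f j) + S ^ 2 * r j := by
    intro j
    have h2 : Real.sqrt (f j) ^ 2 = f j := Real.sq_sqrt (hf j).le
    have hrj : r j ≠ 0 := (hr j).ne'
    rw [div_eq_iff hrj, sub_sq, h2]
    field_simp
  have hident : ∑ j, (Real.sqrt (f j) - S * r j) ^ 2 / r j = (∑ j, f j / r j) - S ^ 2 := by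
    calc ∑ j, (Real.sqrt (f j) - S * r j) ^ 2 / r j
        = ∑ j, (f j / r j - 2 * S * Real.sqrt (f j) + S ^ 2 * r j) :=
          Finset.sum_congr rfl fun j _ => hterm j
      _ = (∑ j, f j / r j) - 2 * S * (∑ j, Real.sqrt (f j)) + S ^ 2 * ∑ j, r j := by
          rw [Finset.sum_add_distrib, Finset.sum_sub_distrib, ← Finset.mul_sum,
            ← Finset.mul_sum]
      _ = (∑ j, f j / r j) - S ^ 2 := by rw [hsum, ← hS_def]; ring
  have hnn : ∀ j, 0 ≤ (Real.sqrt (f j) - S * r j) ^ 2 / r j :=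
    fun j => div_nonneg (sq_nonneg _) (hr j).le
  have hsumnn : 0 ≤ ∑ j, (Real.sqrt (f j) - S * r j) ^ 2 / r j :=
    Finset.sum_nonneg fun j _ => hnn j
  constructor
  · linarith [hident]
  constructor
  · intro h
    have hz : ∑ j, (Real.sqrt (f j) - S * r j) ^ 2 / r j = 0 := by rw [hident, h]; ring
    have hall := (Finset.sum_eq_zero_iff_of_nonneg fun j _ => hnn j).1 hz
    intro j
    have hj := hall j (Finset.mem_univ j)
    have h3 : (Real.sqrt (f j) - S * r j) ^ 2 = 0 := by
      rcases div_eq_zero_iff.1 hj with h' | h'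
      · exact h'
      · exact absurd h' (hr j).ne'
    have h4 : Real.sqrt (f j) = S * r j := by
      have := sub_eq_zero.1 (pow_eq_zero_iff (by norm_num) |>.1 h3)
      linarith
    rw [eq_div_iff hS.ne', mul_comm]
    exact h4.symm
  · intro h
    have hz : ∀ j, (Real.sqrt (f j) - S * r j) ^ 2 / r j = 0 := by
      intro j
      have h0 : Real.sqrt (f j) - S * (Real.sqrt (f j) / S) = 0 := by
        field_simp
        ring
      rw [h j, h0]
      simp
    have hsz : ∑ j, (Real.sqrt (f j) - S * r j) ^ 2 / r j = 0 :=
      Finset.sum_eq_zero fun j _ => hz j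
    linarith [hident, hsz]

set_option maxHeartbeats 2000000 in
/-- **Theorem 2: oracle-optimal sequential sampling policy.**
In the oracle adaptive sampling model (`p ∈ (0,1)^N`; `ℱ_{t−1}`-measurable random
probability vectors `q t ∈ (0,1]^N` with `q_t(j) ≥ τ/N` a.s. for a fixed `τ ∈ (0,1)`;
`I t` sampled from `q t` given `ℱ_{t−1}`; `Y t ∈ {0,1}` with
`P(Y_t = 1 | ℱ_{t−1}, I_t) = p_{I_t}` a.s.; `ℱ t ⊇ σ(ℱ_{t−1}, I_t, Y_t)`), the statistic
`M_{n_b} = Σ_{t=1}^{n_b} (Y_t − p_{I_t})/q_t(I_t)` satisfies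
`Var(M_{n_b}) ≥ n_b·(Σ_j √(p_j(1 − p_j)))²`, with equality exactly when for every
`1 ≤ t ≤ n_b` and every `j`, `q_t(j) = √(p_j(1−p_j)) / Σ_k √(p_k(1−p_k))` almost
surely; i.e. the variance-minimizing policy is time-independent and uniquely given by
`q_t(j) ∝ √(p_j(1 − p_j))`. -/
theorem oracle_optimal_sampling_policy
    {Ω : Type*} {mΩ : MeasurableSpace Ω} (μ : Measure Ω) [IsProbabilityMeasure μ]
    (ℱ : Filtration ℕ mΩ)
    (N : ℕ) (hN : 1 ≤ N) (nb : ℕ) (hnb : 1 ≤ nb)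
    (τ : ℝ) (hτ : τ ∈ Set.Ioo (0 : ℝ) 1)
    (p : Fin N → ℝ) (hp : ∀ j, p j ∈ Set.Ioo (0 : ℝ) 1)
    (q : ℕ → Ω → Fin N → ℝ) (I : ℕ → Ω → Fin N) (Y : ℕ → Ω → ℝ)
    (hq_meas : ∀ t, 1 ≤ t → ∀ j, Measurable[ℱ (t - 1)] fun ω => q t ω j)
    (hq_lb : ∀ t, 1 ≤ t → ∀ j, ∀ᵐ ω ∂μ, τ / N ≤ q t ω j)
    (hq_sum : ∀ t, 1 ≤ t → ∀ᵐ ω ∂μ, ∑ j, q t ω j = 1)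
    (hI_meas : ∀ t, 1 ≤ t → Measurable (I t))
    (hY_meas : ∀ t, 1 ≤ t → Measurable (Y t))
    (hY01 : ∀ t, 1 ≤ t → ∀ ω, Y t ω = 0 ∨ Y t ω = 1)
    (hI_dist : ∀ t, 1 ≤ t → ∀ j,
      μ[(fun ω => if I t ω = j then (1 : ℝ) else 0) | ℱ (t - 1)]
        =ᵐ[μ] fun ω => q t ω j)
    (hY_dist : ∀ t, 1 ≤ t →
      μ[(fun ω => if Y t ω = 1 then (1 : ℝ) else 0)
          | ℱ (t - 1) ⊔ MeasurableSpace.comap (I t) (⊤ : MeasurableSpace (Fin N))]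
        =ᵐ[μ] fun ω => p (I t ω))
    (hfilt : ∀ t, 1 ≤ t →
      ℱ (t - 1) ⊔ MeasurableSpace.comap (I t) (⊤ : MeasurableSpace (Fin N))
          ⊔ MeasurableSpace.comap (Y t) (inferInstance : MeasurableSpace ℝ)
        ≤ ℱ t)
    (M : Ω → ℝ)
    (hM : ∀ ω, M ω = ∑ t ∈ Icc 1 nb, (Y t ω - p (I t ω)) / q t ω (I t ω)) :
    (nb : ℝ) * (∑ j, Real.sqrt (p j * (1 - p j))) ^ 2 ≤ ProbabilityTheory.variance M μ ∧
    (ProbabilityTheory.variance M μ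
        = (nb : ℝ) * (∑ j, Real.sqrt (p j * (1 - p j))) ^ 2 ↔
      ∀ t, 1 ≤ t → t ≤ nb → ∀ j,
        (fun ω => q t ω j) =ᵐ[μ]
          fun _ => Real.sqrt (p j * (1 - p j)) / ∑ k, Real.sqrt (p k * (1 - p k))) := by
  classical
  obtain ⟨hτ0, hτ1⟩ := hτ
  have hNpos : 0 < N := hN
  have hN0 : (0:ℝ) < (N:ℝ) := by exact_mod_cast hNpos
  have hD : 0 < τ / (N:ℝ) := div_pos hτ0 hN0
  have hf : ∀ j, 0 < p j * (1 - p j) := fun j => mul_pos (hp j).1 (sub_pos.2 (hp j).2)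
  have hf1 : ∀ j, p j * (1 - p j) ≤ 1 := fun j => by nlinarith [(hp j).1, (hp j).2]
  haveI : Nonempty (Fin N) := ⟨⟨0, hNpos⟩⟩
  set S : ℝ := ∑ j, Real.sqrt (p j * (1 - p j)) with hS_def
  have hS : 0 < S :=
    Finset.sum_pos (fun j _ => Real.sqrt_pos.2 (hf j)) Finset.univ_nonempty
  set X : ℕ → Ω → ℝ := fun t ω => (Y t ω - p (I t ω)) / q t ω (I t ω) with hX_def
  have hXapp : ∀ t ω, X t ω = (Y t ω - p (I t ω)) / q t ω (I t ω) := fun _ _ => rfl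
  have hcard : (Icc 1 nb).card = nb := by rw [Nat.card_Icc]; omega
  -- integrability from a.e. boundedness
  have hbint : ∀ (g : Ω → ℝ) (C : ℝ), AEStronglyMeasurable g μ →
      (∀ᵐ ω ∂μ, |g ω| ≤ C) → Integrable g μ := fun g C hg h =>
    (integrable_const C).mono' hg (by filter_upwards [h] with ω hω; simpa using hω)
  -- measurability helpers for compositions with I t
  have hIset : ∀ (t : ℕ) (m : MeasurableSpace Ω),
      MeasurableSpace.comap (I t) (⊤ : MeasurableSpace (Fin N)) ≤ m →
      ∀ j, MeasurableSet[m] {ω | I t ω = j} := by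
    intro t m hle j
    exact hle _ ⟨{j}, MeasurableSpace.measurableSet_top, rfl⟩
  have hcomapI : ∀ t, 1 ≤ t →
      MeasurableSpace.comap (I t) (⊤ : MeasurableSpace (Fin N)) ≤ mΩ := by
    intro t ht s hs
    obtain ⟨u, -, rfl⟩ := hs
    exact hI_meas t ht MeasurableSpace.measurableSet_top
  have hcomp : ∀ (t : ℕ) (m : MeasurableSpace Ω),
      (∀ j, MeasurableSet[m] {ω | I t ω = j}) →
      ∀ (g : Ω → Fin N → ℝ), (∀ j, Measurable[m] fun ω => g ω j) →
      Measurable[m] fun ω => g ω (I t ω) := by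
    intro t m hIm g hg
    have he : (fun ω => g ω (I t ω)) = fun ω => ∑ j, if I t ω = j then g ω j else 0 := by
      funext ω; simp
    rw [he]
    exact Finset.measurable_sum _ fun j _ => Measurable.ite (hIm j) (hg j) measurable_const
  -- filtration facts
  have hcomapI_le_F : ∀ t, 1 ≤ t →
      MeasurableSpace.comap (I t) (⊤ : MeasurableSpace (Fin N)) ≤ ℱ t :=
    fun t ht => le_trans (le_sup_right.trans le_sup_left) (hfilt t ht)
  have hcomapY_le_F : ∀ t, 1 ≤ t →
      MeasurableSpace.comap (Y t) (inferInstance : MeasurableSpace ℝ) ≤ ℱ t :=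
    fun t ht => le_trans le_sup_right (hfilt t ht)
  have hYmF : ∀ t, 1 ≤ t → Measurable[ℱ t] (Y t) := by
    intro t ht s hs
    exact hcomapY_le_F t ht _ ⟨s, hs, rfl⟩
  have hXm : ∀ t, 1 ≤ t → Measurable[ℱ t] (X t) := by
    intro t ht
    have hI' := hIset t (ℱ t) (hcomapI_le_F t ht)
    have hpI : Measurable[ℱ t] fun ω => p (I t ω) :=
      hcomp t (ℱ t) hI' (fun _ j => p j) fun j => measurable_const
    have hqI : Measurable[ℱ t] fun ω => q t ω (I t ω) :=
      hcomp t (ℱ t) hI' (fun ω j => q t ω j)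
        (fun j => (hq_meas t ht j).mono (ℱ.mono (Nat.sub_le t 1)) le_rfl)
    exact ((hYmF t ht).sub hpI).div hqI
  have hXmΩ : ∀ t, 1 ≤ t → Measurable (X t) := fun t ht => (hXm t ht).mono (ℱ.le t) le_rfl
  -- a.e. facts on q
  have hqae : ∀ t, 1 ≤ t → ∀ᵐ ω ∂μ, (∀ j, τ / N ≤ q t ω j) ∧ ∑ j, q t ω j = 1 :=
    fun t ht => (ae_all_iff.2 (hq_lb t ht)).and (hq_sum t ht)
  -- boundedness of X
  have hXbd : ∀ t, 1 ≤ t → ∀ᵐ ω ∂μ, |X t ω| ≤ (N:ℝ) / τ := by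
    intro t ht
    filter_upwards [hqae t ht] with ω hω
    have hq0 : 0 < q t ω (I t ω) := lt_of_lt_of_le hD (hω.1 _)
    have h1 : |Y t ω - p (I t ω)| ≤ 1 := by
      rcases hY01 t ht ω with h | h <;> rw [h] <;> rw [abs_le] <;>
        constructor <;> nlinarith [(hp (I t ω)).1, (hp (I t ω)).2]
    calc |X t ω| = |Y t ω - p (I t ω)| / q t ω (I t ω) := by
          rw [hXapp, abs_div, abs_of_pos hq0]
      _ ≤ 1 / (τ / N) := div_le_div₀ zero_le_one h1 hD (hω.1 _)
      _ = (N:ℝ) / τ := one_div_div _ _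
  have hXint : ∀ t, 1 ≤ t → Integrable (X t) μ := fun t ht =>
    hbint _ _ ((hXmΩ t ht).aestronglyMeasurable) (hXbd t ht)
  have hYint : ∀ t, 1 ≤ t → Integrable (Y t) μ := fun t ht =>
    hbint _ 1 ((hY_meas t ht).aestronglyMeasurable)
      (Filter.Eventually.of_forall fun ω => by rcases hY01 t ht ω with h | h <;> simp [h])
  have hfqint : ∀ t, 1 ≤ t → ∀ j, Integrable (fun ω => p j * (1 - p j) / q t ω j) μ := by
    intro t ht j
    refine hbint _ ((N:ℝ)/τ)
      ((measurable_const.div ((hq_meas t ht j).mono (ℱ.le _) le_rfl)).aestronglyMeasurable) ?_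
    filter_upwards [hqae t ht] with ω hω
    have hq0 : 0 < q t ω j := lt_of_lt_of_le hD (hω.1 j)
    rw [abs_div, abs_of_pos hq0, abs_of_pos (hf j)]
    calc p j * (1 - p j) / q t ω j ≤ 1 / (τ / N) :=
          div_le_div₀ zero_le_one (hf1 j) hD (hω.1 j)
      _ = (N:ℝ) / τ := one_div_div _ _
  have hGint : ∀ t, 1 ≤ t →
      Integrable (fun ω => ∑ j, p j * (1 - p j) / q t ω j) μ :=
    fun t ht => integrable_finset_sum _ fun j _ => hfqint t ht j
  -- the key conditional-expectation computations
  have hkey : ∀ t, 1 ≤ t → (μ[X t | ℱ (t-1)] =ᵐ[μ] 0) ∧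
      (∫ ω, X t ω ^ 2 ∂μ = ∫ ω, (∑ j, p j * (1 - p j) / q t ω j) ∂μ) := by
    intro t ht
    set m' := ℱ (t-1) ⊔ MeasurableSpace.comap (I t) (⊤ : MeasurableSpace (Fin N))
      with hm'_def
    have hm : ℱ (t-1) ≤ mΩ := ℱ.le _
    have hm' : m' ≤ mΩ := sup_le hm (hcomapI t ht)
    have hI' : ∀ j, MeasurableSet[m'] {ω | I t ω = j} := hIset t m' le_sup_right
    have hpIm : Measurable[m'] fun ω => p (I t ω) :=
      hcomp t m' hI' (fun _ j => p j) fun j => measurable_const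
    have hpIΩ : Measurable[mΩ] fun ω => p (I t ω) := hpIm.mono hm' le_rfl
    have hpIint : Integrable (fun ω => p (I t ω)) μ :=
      hbint _ 1 hpIΩ.aestronglyMeasurable
        (Filter.Eventually.of_forall fun ω => by
          have h := hp (I t ω); rw [abs_le]; constructor <;> nlinarith [h.1, h.2])
    have hqIm : Measurable[m'] fun ω => q t ω (I t ω) :=
      hcomp t m' hI' (fun ω j => q t ω j)
        (fun j => (hq_meas t ht j).mono le_sup_left le_rfl)
    have hYceq : (fun ω => if Y t ω = 1 then (1:ℝ) else 0) = Y t :=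
      funext fun ω => by rcases hY01 t ht ω with h | h <;> simp [h]
    have hYce : μ[Y t | m'] =ᵐ[μ] fun ω => p (I t ω) := by
      have h := hY_dist t ht
      rwa [hYceq] at h
    -- conditional expectation of X t given m' is 0
    have hcinv : StronglyMeasurable[m'] fun ω => (q t ω (I t ω))⁻¹ :=
      hqIm.inv.stronglyMeasurable
    have hYsub : Integrable (fun ω => Y t ω - p (I t ω)) μ := (hYint t ht).sub hpIint
    have hXeq : X t = (fun ω => (q t ω (I t ω))⁻¹) * fun ω => Y t ω - p (I t ω) := by
      funext ω; exact div_eq_inv_mul _ _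
    have hXint' :
        Integrable ((fun ω => (q t ω (I t ω))⁻¹) * fun ω => Y t ω - p (I t ω)) μ := by
      rw [← hXeq]; exact hXint t ht
    have hpull := condExp_mul_of_stronglyMeasurable_left (μ := μ) hcinv hXint' hYsub
    have h2 : μ[(fun ω => p (I t ω)) | m'] = fun ω => p (I t ω) :=
      condExp_of_stronglyMeasurable hm' hpIm.stronglyMeasurable hpIint
    have hsubce : μ[(fun ω => Y t ω - p (I t ω)) | m'] =ᵐ[μ] 0 := by
      have heq : (fun ω => Y t ω - p (I t ω)) = Y t - fun ω => p (I t ω) := rfl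
      rw [heq]
      have h1 := condExp_sub (μ := μ) (m := m') (hYint t ht) hpIint
      refine h1.trans ?_
      filter_upwards [hYce] with ω hω
      simp [Pi.sub_apply, h2, hω]
    have hXce' : μ[X t | m'] =ᵐ[μ] 0 := by
      rw [hXeq]
      refine hpull.trans ?_
      filter_upwards [hsubce] with ω hω
      simp only [Pi.mul_apply, Pi.zero_apply] at *
      rw [hω, mul_zero]
    have hXceF : μ[X t | ℱ (t-1)] =ᵐ[μ] 0 := by
      have htower := condExp_condExp_of_le (μ := μ) (f := X t)
        (le_sup_left : ℱ (t-1) ≤ m') hm'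
      refine htower.symm.trans ((condExp_congr_ae hXce').trans ?_)
      rw [condExp_zero]
    refine ⟨hXceF, ?_⟩
    -- second moment
    have hZeq : ∀ ω, (Y t ω - p (I t ω))^2
        = (1 - 2 * p (I t ω)) * Y t ω + p (I t ω)^2 := by
      intro ω; rcases hY01 t ht ω with h | h <;> rw [h] <;> ring
    have hXsqeq : (fun ω => X t ω ^ 2) = (fun ω => ((q t ω (I t ω))^2)⁻¹) *
        fun ω => (1 - 2 * p (I t ω)) * Y t ω + p (I t ω)^2 := by
      funext ω
      show ((Y t ω - p (I t ω)) / q t ω (I t ω))^2 = _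
      rw [Pi.mul_apply, ← hZeq ω, div_pow]
      exact div_eq_inv_mul _ _
    have hc2 : StronglyMeasurable[m'] fun ω => ((q t ω (I t ω))^2)⁻¹ :=
      ((hqIm.pow_const 2).inv).stronglyMeasurable
    have hZm : Measurable[mΩ] fun ω => (1 - 2 * p (I t ω)) * Y t ω + p (I t ω)^2 :=
      ((measurable_const.sub (hpIΩ.const_mul 2)).mul (hY_meas t ht)).add (hpIΩ.pow_const 2)
    have hZint : Integrable (fun ω => (1 - 2 * p (I t ω)) * Y t ω + p (I t ω)^2) μ :=
      hbint _ 4 hZm.aestronglyMeasurable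
        (Filter.Eventually.of_forall fun ω => by
          have h := hp (I t ω)
          rcases hY01 t ht ω with hy | hy <;> rw [hy] <;> rw [abs_le] <;>
            constructor <;> nlinarith [h.1, h.2])
    have hXsqint0 : Integrable (fun ω => X t ω ^ 2) μ :=
      hbint _ (((N:ℝ)/τ)^2) (((hXmΩ t ht).pow_const 2).aestronglyMeasurable)
        (by filter_upwards [hXbd t ht] with ω hω
            rw [abs_pow]
            exact pow_le_pow_left₀ (abs_nonneg _) hω 2)
    have hint2 : Integrable ((fun ω => ((q t ω (I t ω))^2)⁻¹) *
        fun ω => (1 - 2 * p (I t ω)) * Y t ω + p (I t ω)^2) μ := by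
      rw [← hXsqeq]; exact hXsqint0
    have hpull2 := condExp_mul_of_stronglyMeasurable_left (μ := μ) hc2 hint2 hZint
    have hZce : μ[(fun ω => (1 - 2 * p (I t ω)) * Y t ω + p (I t ω)^2) | m']
        =ᵐ[μ] fun ω => p (I t ω) * (1 - p (I t ω)) := by
      have ha : Integrable (fun ω => (1 - 2 * p (I t ω)) * Y t ω) μ :=
        hbint _ 3 (((measurable_const.sub (hpIΩ.const_mul 2)).mul
            (hY_meas t ht)).aestronglyMeasurable)
          (Filter.Eventually.of_forall fun ω => by
            have h := hp (I t ω)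
            rcases hY01 t ht ω with hy | hy <;> rw [hy] <;> rw [abs_le] <;>
              constructor <;> nlinarith [h.1, h.2])
      have hb : Integrable (fun ω => p (I t ω)^2) μ :=
        hbint _ 1 ((hpIΩ.pow_const 2).aestronglyMeasurable)
          (Filter.Eventually.of_forall fun ω => by
            have h := hp (I t ω); rw [abs_le]; constructor <;> nlinarith [h.1, h.2])
      have heq : (fun ω => (1 - 2 * p (I t ω)) * Y t ω + p (I t ω)^2)
          = (fun ω => (1 - 2 * p (I t ω)) * Y t ω) + fun ω => p (I t ω)^2 := rfl
      rw [heq]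
      have h1 := condExp_add (μ := μ) (m := m') ha hb
      have haM : StronglyMeasurable[m'] fun ω => 1 - 2 * p (I t ω) :=
        (measurable_const.sub (hpIm.const_mul 2)).stronglyMeasurable
      have heq2 : (fun ω => (1 - 2 * p (I t ω)) * Y t ω)
          = (fun ω => 1 - 2 * p (I t ω)) * Y t := rfl
      have ha' : Integrable ((fun ω => 1 - 2 * p (I t ω)) * Y t) μ := by
        rw [← heq2]; exact ha
      have h2' := condExp_mul_of_stronglyMeasurable_left (μ := μ) haM ha' (hYint t ht)
      have h3 : μ[(fun ω => p (I t ω)^2) | m'] = fun ω => p (I t ω)^2 :=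
        condExp_of_stronglyMeasurable hm' (hpIm.pow_const 2).stronglyMeasurable hb
      refine h1.trans ?_
      have h2'' : μ[(fun ω => (1 - 2 * p (I t ω)) * Y t ω) | m']
          =ᵐ[μ] (fun ω => 1 - 2 * p (I t ω)) * μ[Y t | m'] := by
        rw [heq2]; exact h2'
      filter_upwards [h2'', hYce] with ω hω1 hω2
      simp only [Pi.add_apply, Pi.mul_apply, h3]
      rw [hω1]
      simp only [Pi.mul_apply]
      rw [hω2]
      ring
    have hW : μ[(fun ω => X t ω ^ 2) | m'] =ᵐ[μ]
        fun ω => ((q t ω (I t ω))^2)⁻¹ * (p (I t ω) * (1 - p (I t ω))) := by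
      rw [hXsqeq]
      refine hpull2.trans ?_
      filter_upwards [hZce] with ω hω
      simp only [Pi.mul_apply]
      rw [hω]
    -- integral computation
    have e1 : ∫ ω, X t ω ^ 2 ∂μ
        = ∫ ω, ((q t ω (I t ω))^2)⁻¹ * (p (I t ω) * (1 - p (I t ω))) ∂μ := by
      rw [← integral_condExp (μ := μ) hm' (f := fun ω => X t ω ^ 2)]
      exact integral_congr_ae hW
    have hwm : ∀ j, Measurable[ℱ (t-1)] fun ω => p j * (1 - p j) * ((q t ω j)^2)⁻¹ :=
      fun j => ((hq_meas t ht j).pow_const 2).inv.const_mul _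
    have hwbd : ∀ j, ∀ᵐ ω ∂μ, |p j * (1 - p j) * ((q t ω j)^2)⁻¹| ≤ ((N:ℝ)/τ)^2 := by
      intro j
      filter_upwards [hqae t ht] with ω hω
      have hq0 : 0 < q t ω j := lt_of_lt_of_le hD (hω.1 j)
      have h1 : ((q t ω j)^2)⁻¹ ≤ (((τ:ℝ)/N)^2)⁻¹ :=
        inv_anti₀ (pow_pos hD 2) (pow_le_pow_left₀ hD.le (hω.1 j) 2)
      have h2 : (((τ:ℝ)/N)^2)⁻¹ = ((N:ℝ)/τ)^2 := by rw [← inv_pow, inv_div]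
      rw [abs_of_pos (mul_pos (hf j) (inv_pos.2 (pow_pos hq0 2)))]
      calc p j * (1 - p j) * ((q t ω j)^2)⁻¹ ≤ 1 * (((τ:ℝ)/N)^2)⁻¹ :=
            mul_le_mul (hf1 j) h1 (inv_nonneg.2 (sq_nonneg _)) zero_le_one
        _ = ((N:ℝ)/τ)^2 := by rw [one_mul, h2]
    have hindm : ∀ j, Measurable[mΩ] fun ω => if I t ω = j then (1:ℝ) else 0 :=
      fun j => Measurable.ite (hIset t mΩ (hcomapI t ht) j) measurable_const measurable_const
    have hindint : ∀ j, Integrable (fun ω => if I t ω = j then (1:ℝ) else 0) μ :=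
      fun j => hbint _ 1 (hindm j).aestronglyMeasurable
        (Filter.Eventually.of_forall fun ω => by split <;> simp)
    have hwind_int : ∀ j, Integrable
        ((fun ω => p j * (1 - p j) * ((q t ω j)^2)⁻¹) *
          fun ω => if I t ω = j then (1:ℝ) else 0) μ := by
      intro j
      refine hbint _ (((N:ℝ)/τ)^2)
        ((((hwm j).mono (ℱ.le _) le_rfl).mul (hindm j)).aestronglyMeasurable) ?_
      filter_upwards [hwbd j] with ω hω
      calc |((fun ω => p j * (1 - p j) * ((q t ω j)^2)⁻¹) *
              fun ω => if I t ω = j then (1:ℝ) else 0) ω|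
          = |p j * (1 - p j) * ((q t ω j)^2)⁻¹| * |if I t ω = j then (1:ℝ) else 0| := by
            rw [Pi.mul_apply, abs_mul]
        _ ≤ ((N:ℝ)/τ)^2 * 1 :=
            mul_le_mul hω (by split <;> simp) (abs_nonneg _) (sq_nonneg _)
        _ = ((N:ℝ)/τ)^2 := mul_one _
    have e3 : ∫ ω, ((q t ω (I t ω))^2)⁻¹ * (p (I t ω) * (1 - p (I t ω))) ∂μ
        = ∑ j, ∫ ω, ((fun ω => p j * (1 - p j) * ((q t ω j)^2)⁻¹) *
            fun ω => if I t ω = j then (1:ℝ) else 0) ω ∂μ := by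
      have he2 : (fun ω => ((q t ω (I t ω))^2)⁻¹ * (p (I t ω) * (1 - p (I t ω))))
          = fun ω => ∑ j, ((fun ω => p j * (1 - p j) * ((q t ω j)^2)⁻¹) *
              fun ω => if I t ω = j then (1:ℝ) else 0) ω := by
        funext ω
        have h' : ∀ j, ((fun ω => p j * (1 - p j) * ((q t ω j)^2)⁻¹) *
            fun ω => if I t ω = j then (1:ℝ) else 0) ω
            = if I t ω = j then p j * (1 - p j) * ((q t ω j)^2)⁻¹ else 0 := by
          intro j
          rw [Pi.mul_apply]
          split <;> simp
        rw [Finset.sum_congr rfl fun j _ => h' j, Finset.sum_ite_eq]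
        simp only [Finset.mem_univ, if_true]
        ring
      rw [he2]
      exact integral_finset_sum _ fun j _ => hwind_int j
    have e4 : ∀ j, ∫ ω, ((fun ω => p j * (1 - p j) * ((q t ω j)^2)⁻¹) *
          fun ω => if I t ω = j then (1:ℝ) else 0) ω ∂μ
        = ∫ ω, p j * (1 - p j) / q t ω j ∂μ := by
      intro j
      have hpl := condExp_mul_of_stronglyMeasurable_left (μ := μ) (hwm j).stronglyMeasurable
        (hwind_int j) (hindint j)
      rw [← integral_condExp (μ := μ) hm
        (f := (fun ω => p j * (1 - p j) * ((q t ω j)^2)⁻¹) *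
          fun ω => if I t ω = j then (1:ℝ) else 0)]
      refine integral_congr_ae (hpl.trans ?_)
      filter_upwards [hI_dist t ht j, hqae t ht] with ω h1 h2
      simp only [Pi.mul_apply]
      rw [h1]
      have hq0 : q t ω j ≠ 0 := (lt_of_lt_of_le hD (h2.1 j)).ne'
      field_simp
    calc ∫ ω, X t ω ^ 2 ∂μ
        = ∫ ω, ((q t ω (I t ω))^2)⁻¹ * (p (I t ω) * (1 - p (I t ω))) ∂μ := e1
      _ = ∑ j, ∫ ω, ((fun ω => p j * (1 - p j) * ((q t ω j)^2)⁻¹) *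
            fun ω => if I t ω = j then (1:ℝ) else 0) ω ∂μ := e3
      _ = ∑ j, ∫ ω, p j * (1 - p j) / q t ω j ∂μ :=
          Finset.sum_congr rfl fun j _ => e4 j
      _ = ∫ ω, (∑ j, p j * (1 - p j) / q t ω j) ∂μ :=
          (integral_finset_sum _ fun j _ => hfqint t ht j).symm
  -- integrals of products
  have hprodint : ∀ s t, 1 ≤ s → 1 ≤ t → Integrable (fun ω => X s ω * X t ω) μ := by
    intro s t hs ht
    refine hbint _ (((N:ℝ)/τ) * ((N:ℝ)/τ))
      (((hXmΩ s hs).mul (hXmΩ t ht)).aestronglyMeasurable) ?_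
    filter_upwards [hXbd s hs, hXbd t ht] with ω h1 h2
    rw [abs_mul]
    exact mul_le_mul h1 h2 (abs_nonneg _) (div_nonneg hN0.le hτ0.le)
  have hcross : ∀ s t, 1 ≤ s → s < t → ∫ ω, X s ω * X t ω ∂μ = 0 := by
    intro s t hs hst
    have ht : 1 ≤ t := hs.trans hst.le
    have hm : ℱ (t-1) ≤ mΩ := ℱ.le _
    have hsm : StronglyMeasurable[ℱ (t-1)] (X s) :=
      ((hXm s hs).mono (ℱ.mono (Nat.le_pred_of_lt hst)) le_rfl).stronglyMeasurable
    have heq : (fun ω => X s ω * X t ω) = X s * X t := rfl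
    have hint : Integrable (X s * X t) μ := by rw [← heq]; exact hprodint s t hs ht
    have hpl := condExp_mul_of_stronglyMeasurable_left (μ := μ) hsm hint (hXint t ht)
    have hz : (X s * μ[X t | ℱ (t-1)]) =ᵐ[μ] 0 := by
      filter_upwards [(hkey t ht).1] with ω hω
      simp only [Pi.mul_apply, Pi.zero_apply] at *
      rw [hω, mul_zero]
    rw [heq, ← integral_condExp (μ := μ) hm (f := X s * X t),
      integral_congr_ae (hpl.trans hz)]
    simp
  have hXzero : ∀ t, 1 ≤ t → ∫ ω, X t ω ∂μ = 0 := by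
    intro t ht
    have hm : ℱ (t-1) ≤ mΩ := ℱ.le _
    rw [← integral_condExp (μ := μ) hm (f := X t),
      integral_congr_ae (hkey t ht).1]
    simp
  -- M facts
  have hMeq : M = fun ω => ∑ t ∈ Icc 1 nb, X t ω := funext fun ω => hM ω
  have hMmeas : Measurable M := by
    rw [hMeq]
    exact Finset.measurable_sum _ fun t ht' => hXmΩ t (mem_Icc.1 ht').1
  have hMbd : ∀ᵐ ω ∂μ, |M ω| ≤ (nb : ℝ) * ((N:ℝ)/τ) := by
    have hall : ∀ᵐ ω ∂μ, ∀ t, t ∈ Icc 1 nb → |X t ω| ≤ (N:ℝ)/τ := by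
      rw [ae_all_iff]
      intro t
      by_cases ht' : t ∈ Icc 1 nb
      · exact (hXbd t (mem_Icc.1 ht').1).mono fun ω h _ => h
      · exact Filter.Eventually.of_forall fun ω h' => absurd h' ht'
    filter_upwards [hall] with ω hω
    calc |M ω| ≤ ∑ t ∈ Icc 1 nb, |X t ω| := by
          rw [hM ω]
          exact Finset.abs_sum_le_sum_abs _ _
      _ ≤ (Icc 1 nb).card • ((N:ℝ)/τ) :=
          Finset.sum_le_card_nsmul _ _ _ fun t ht' => hω t ht'
      _ = (nb : ℝ) * ((N:ℝ)/τ) := by rw [hcard, nsmul_eq_mul]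
  have hM2 : MemLp M 2 μ :=
    (memLp_top_of_bound hMmeas.aestronglyMeasurable _
      (by filter_upwards [hMbd] with ω h; simpa using h)).mono_exponent le_top
  -- variance identity
  have hvar : ProbabilityTheory.variance M μ
      = ∑ t ∈ Icc 1 nb, ∫ ω, (∑ j, p j * (1 - p j) / q t ω j) ∂μ := by
    rw [ProbabilityTheory.variance_eq_sub hM2]
    have hEM : ∫ x, M x ∂μ = 0 := by
      rw [hMeq, integral_finset_sum _ fun t ht' => hXint t (mem_Icc.1 ht').1]
      exact Finset.sum_eq_zero fun t ht' => hXzero t (mem_Icc.1 ht').1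
    have hEM2 : ∫ x, (M ^ 2) x ∂μ
        = ∑ t ∈ Icc 1 nb, ∫ ω, (∑ j, p j * (1 - p j) / q t ω j) ∂μ := by
      have h1 : M ^ 2 = fun ω => ∑ s ∈ Icc 1 nb, ∑ t ∈ Icc 1 nb, X s ω * X t ω := by
        funext ω
        rw [Pi.pow_apply, hM ω, sq, Finset.sum_mul_sum]
      simp only [h1]
      rw [integral_finset_sum _ fun s hs =>
        integrable_finset_sum (μ := μ) _ fun t' ht' =>
          hprodint s t' (mem_Icc.1 hs).1 (mem_Icc.1 ht').1]
      refine Finset.sum_congr rfl fun s hs => ?_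
      rw [integral_finset_sum _ fun t' ht' =>
        hprodint s t' (mem_Icc.1 hs).1 (mem_Icc.1 ht').1]
      rw [Finset.sum_eq_single s]
      · have hsq : (fun ω => X s ω * X s ω) = fun ω => X s ω ^ 2 :=
          funext fun ω => (sq _).symm
        rw [hsq]
        exact (hkey s (mem_Icc.1 hs).1).2
      · intro b hb hbs
        rcases lt_or_gt_of_ne hbs with hlt | hgt
        · have hcomm : (fun ω => X s ω * X b ω) = fun ω => X b ω * X s ω :=
            funext fun ω => mul_comm _ _
          rw [hcomm]
          exact hcross b s (mem_Icc.1 hb).1 hlt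
        · exact hcross s b (mem_Icc.1 hs).1 hgt
      · intro hs'; exact absurd hs hs'
    rw [hEM2, hEM]
    simp
  -- pointwise lower bound
  have hGlb : ∀ t, 1 ≤ t → ∀ᵐ ω ∂μ, S^2 ≤ ∑ j, p j * (1 - p j) / q t ω j := by
    intro t ht
    filter_upwards [hqae t ht] with ω hω
    have hr : ∀ j, 0 < q t ω j := fun j => lt_of_lt_of_le hD (hω.1 j)
    exact (ops_cs hN (fun j => p j * (1 - p j)) hf (q t ω) hr hω.2).1
  have hIlb : ∀ t, 1 ≤ t →
      S^2 ≤ ∫ ω, (∑ j, p j * (1 - p j) / q t ω j) ∂μ := by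
    intro t ht
    calc S^2 = ∫ _ω, (S^2 : ℝ) ∂μ := by simp
      _ ≤ _ := integral_mono_ae (integrable_const _) (hGint t ht) (hGlb t ht)
  constructor
  · rw [hvar]
    calc (nb:ℝ) * S^2 = (Icc 1 nb).card • (S^2) := by rw [hcard, nsmul_eq_mul]
      _ ≤ _ := Finset.card_nsmul_le_sum _ _ _ fun t ht' => hIlb t (mem_Icc.1 ht').1
  · rw [hvar]
    constructor
    · intro h t ht1 ht2 j
      have ht' : t ∈ Icc 1 nb := mem_Icc.2 ⟨ht1, ht2⟩
      have hsum0 : ∑ u ∈ Icc 1 nb,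
          ((∫ ω, (∑ j, p j * (1 - p j) / q u ω j) ∂μ) - S^2) = 0 := by
        rw [Finset.sum_sub_distrib, h, Finset.sum_const, hcard, nsmul_eq_mul]
        ring
      have hterm0 := (Finset.sum_eq_zero_iff_of_nonneg
        (fun u hu => sub_nonneg.2 (hIlb u (mem_Icc.1 hu).1))).1 hsum0 t ht'
      have h1 : ∫ ω, ((∑ j, p j * (1 - p j) / q t ω j) - S^2) ∂μ = 0 := by
        rw [integral_sub (hGint t ht1) (integrable_const _), integral_const]
        simp only [probReal_univ, one_smul]
        linarith [hterm0]
      have h2 : (fun ω => (∑ j, p j * (1 - p j) / q t ω j) - S^2) =ᵐ[μ] 0 :=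
        (integral_eq_zero_iff_of_nonneg_ae
          (by filter_upwards [hGlb t ht1] with ω hω
              show (0:ℝ) ≤ (∑ j, p j * (1 - p j) / q t ω j) - S^2
              linarith)
          ((hGint t ht1).sub (integrable_const _))).1 h1
      filter_upwards [h2, hqae t ht1] with ω hω1 hω2
      have hr : ∀ j', 0 < q t ω j' := fun j' => lt_of_lt_of_le hD (hω2.1 j')
      have hGω : ∑ j', p j' * (1 - p j') / q t ω j' = S^2 := by
        simp only [Pi.zero_apply] at hω1
        linarith
      exact ((ops_cs hN (fun j => p j * (1 - p j)) hf (q t ω) hr hω2.2).2).1 hGω j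
    · intro h
      have hGt : ∀ t, 1 ≤ t → t ≤ nb →
          ∫ ω, (∑ j, p j * (1 - p j) / q t ω j) ∂μ = S^2 := by
        intro t ht1 ht2
        have hall : ∀ᵐ ω ∂μ, ∀ j, q t ω j = Real.sqrt (p j * (1 - p j)) / S :=
          ae_all_iff.2 fun j => h t ht1 ht2 j
        have hcalc : ∀ᵐ ω ∂μ, (∑ j, p j * (1 - p j) / q t ω j) = S^2 := by
          filter_upwards [hall, hqae t ht1] with ω hω1 hω2
          have hopt_pos : ∀ j, 0 < Real.sqrt (p j * (1 - p j)) / S :=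
            fun j => div_pos (Real.sqrt_pos.2 (hf j)) hS
          have hopt_sum : ∑ j, Real.sqrt (p j * (1 - p j)) / S = 1 := by
            rw [← Finset.sum_div, ← hS_def, div_self hS.ne']
          have hval := ((ops_cs hN (fun j => p j * (1 - p j)) hf
            (fun j => Real.sqrt (p j * (1 - p j)) / S) hopt_pos hopt_sum).2).2
            fun j => rfl
          calc ∑ j, p j * (1 - p j) / q t ω j
              = ∑ j, p j * (1 - p j) / (Real.sqrt (p j * (1 - p j)) / S) :=
                Finset.sum_congr rfl fun j _ => by rw [hω1 j]
            _ = S^2 := hval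
        calc ∫ ω, (∑ j, p j * (1 - p j) / q t ω j) ∂μ
            = ∫ _ω, (S^2:ℝ) ∂μ := integral_congr_ae hcalc
          _ = S^2 := by simp
      calc ∑ t ∈ Icc 1 nb, ∫ ω, (∑ j, p j * (1 - p j) / q t ω j) ∂μ
          = ∑ _t ∈ Icc 1 nb, (S^2:ℝ) :=
            Finset.sum_congr rfl fun t ht' => hGt t (mem_Icc.1 ht').1 (mem_Icc.1 ht').2
        _ = (nb:ℝ) * S^2 := by rw [Finset.sum_const, hcard, nsmul_eq_mul]
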